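/- arXiv:1301.1067 — 2 statements merged into one kernel-verified Lean document; each statement's English description precedes it below -/
import Mathlib

section
/- The Levi graph of the configuration obtained by V-construction from the Odd graph O_n is isomorphic to the middle-levels (revolving door) graph: the bipartite graph on n-subsets and (n-1)-subsets of a (2n-1)-set with adjacency given by containment. -/
/-- The Odd graph `O_n`: the Kneser graph `K(2n-1, n-1)`, whose vertices are the
`(n-1)`-element subsets of a `(2n-1)`-element set, two vertices adjacent iff disjoint. -/
def oddGraph (n : ℕ) : SimpleGraph {A : Finset (Fin (2 * n - 1)) // A.card = n - 1} where
  Adj u v := u ≠ v ∧ Disjoint u.1 v.1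
  symm := ⟨fun _ _ h => ⟨h.1.symm, h.2.symm⟩⟩
  loopless := ⟨fun _ h => h.1 rfl⟩

/-- The Levi graph of the configuration `N(G)` obtained from `G` by the V-construction:
a bipartite graph on points (vertices `u` of `G`) and blocks (neighbourhoods `N(v)`),
with point `u` adjacent to block `N(v)` iff `u ∈ N(v)`, i.e. iff `u ~ v` in `G`. -/
def leviGraph {V : Type*} (G : SimpleGraph V) : SimpleGraph (V ⊕ V) where
  Adj x y := match x, y with
    | Sum.inl u, Sum.inr v => G.Adj u v
    | Sum.inr v, Sum.inl u => G.Adj u v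
    | _, _ => False
  symm := ⟨by rintro (u | u) (v | v) h <;> simp_all⟩
  loopless := ⟨by rintro (u | u) h <;> exact h⟩

/-- The middle-levels (revolving door) graph of a `(2n-1)`-set: vertices are the subsets of
size `n` or `n-1`, two vertices adjacent iff one is (strictly) contained in the other. -/
def middleLevels (n : ℕ) :
    SimpleGraph {A : Finset (Fin (2 * n - 1)) // A.card = n ∨ A.card = n - 1} where
  Adj u v := u.1 ⊂ v.1 ∨ v.1 ⊂ u.1
  symm := ⟨fun _ _ h => h.symm⟩
  loopless := ⟨fun _ h => h.elim (fun h => ssubset_irrefl _ h) (fun h => ssubset_irrefl _ h)⟩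

/-- The Levi graph of the configuration obtained by the V-construction from the Odd graph
`O_n` (`n ≥ 2`) is isomorphic to the middle-levels graph: the bipartite graph on the
`n`-subsets and `(n-1)`-subsets of a `(2n-1)`-set with adjacency given by containment. -/
theorem stmt_9 (n : ℕ) (hn : 2 ≤ n) :
    Nonempty (leviGraph (oddGraph n) ≃g middleLevels n) := by
  have hc : ∀ A : Finset (Fin (2*n-1)), A.card = n - 1 → Aᶜ.card = n := by
    intro A hA; rw [Finset.card_compl, Fintype.card_fin, hA]; omega
  have hc' : ∀ A : Finset (Fin (2*n-1)), A.card = n → Aᶜ.card = n - 1 := by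
    intro A hA; rw [Finset.card_compl, Fintype.card_fin, hA]; omega
  have hne : n - 1 ≠ n := by omega
  have key : ∀ A B : Finset (Fin (2*n-1)), A.card = n - 1 → B.card = n - 1 →
      ((A ⊂ Bᶜ ∨ Bᶜ ⊂ A) ↔ (A ≠ B ∧ Disjoint A B)) := by
    intro A B hA hB
    constructor
    · rintro (h | h)
      · have hd := le_compl_iff_disjoint_right.mp h.subset
        refine ⟨fun he => ?_, hd⟩
        rw [he, disjoint_self] at hd
        rw [hd] at hB
        simp only [Finset.bot_eq_empty, Finset.card_empty] at hB
        omega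
      · exact absurd (Finset.card_lt_card h) (by rw [hA, hc B hB]; omega)
    · rintro ⟨hne', hd⟩
      left
      refine lt_of_le_of_ne (le_compl_iff_disjoint_right.mpr hd) fun he => ?_
      have := hc B hB
      rw [← he, hA] at this
      omega
  refine ⟨⟨⟨fun x => match x with
    | .inl u => ⟨u.1, Or.inr u.2⟩
    | .inr v => ⟨v.1ᶜ, Or.inl (hc v.1 v.2)⟩,
    fun A => if h : A.1.card = n then .inr ⟨A.1ᶜ, hc' _ h⟩
      else .inl ⟨A.1, A.2.resolve_left h⟩, ?_, ?_⟩, ?_⟩⟩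
  · rintro (u | v)
    · simp only
      rw [dif_neg (fun h => hne (u.2.symm.trans h))]
    · simp only
      rw [dif_pos (hc v.1 v.2)]
      simp
  · rintro ⟨A, hA | hA⟩
    · simp only
      rw [dif_pos hA]
      simp
    · simp only
      rw [dif_neg (fun h => hne (hA.symm.trans h))]
  · rintro (u | u) (v | v) <;>
      simp only [Equiv.coe_fn_mk, middleLevels, leviGraph, oddGraph]
    · constructor
      · rintro (h | h) <;>
          exact absurd (Finset.card_lt_card h) (by rw [u.2, v.2]; omega)
      · exact False.elim
    · rw [ne_eq, Subtype.ext_iff]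
      exact key u.1 v.1 u.2 v.2
    · rw [or_comm, ne_eq, Subtype.ext_iff]
      exact key v.1 u.1 v.2 u.2
    · constructor
      · rintro (h | h) <;>
          exact absurd (Finset.card_lt_card h)
            (by rw [hc u.1 u.2, hc v.1 v.2]; omega)
      · exact False.elim
end

section
/- Wallace–Steiner point theorem: Given four lines in the Euclidean plane in general position (no two parallel, no three concurrent), the circumcircles of the four triangles formed by taking the lines three at a time pass through a common point. -/
/-- Given four lines indexed by `Fin 4` and a symmetric family `p i j` of pairwise
intersection points, `steinerVtx p i m` is the `m`-th vertex of the triangle formed by the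
three lines other than line `i`: the intersection point of two of those three lines. -/
noncomputable def steinerVtx (p : Fin 4 → Fin 4 → EuclideanSpace ℝ (Fin 2))
    (i : Fin 4) (m : Fin 3) : EuclideanSpace ℝ (Fin 2) :=
  p (i.succAbove (m.succAbove 0)) (i.succAbove (m.succAbove 1))

section MiquelAux

local instance factFinrankE2 : Fact (Module.finrank ℝ (EuclideanSpace ℝ (Fin 2)) = 2) :=
  ⟨finrank_euclideanSpace_fin⟩

noncomputable local instance orientE2 : Module.Oriented ℝ (EuclideanSpace ℝ (Fin 2)) (Fin 2) :=
  ⟨Module.Basis.orientation (Module.finBasisOfFinrankEq _ _ finrank_euclideanSpace_fin)⟩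

local notation "V2" => EuclideanSpace ℝ (Fin 2)
private noncomputable abbrev ori2 : Orientation ℝ (EuclideanSpace ℝ (Fin 2)) (Fin 2) :=
  Module.Oriented.positiveOrientation

open EuclideanGeometry Affine Real

/-- Extract a nonzero scalar relating two difference vectors along a collinear set. -/
private lemma collinear_dir {s : Set (EuclideanSpace ℝ (Fin 2))} (hc : Collinear ℝ s)
    {X Y P Q : EuclideanSpace ℝ (Fin 2)} (hX : X ∈ s) (hY : Y ∈ s) (hP : P ∈ s) (hQ : Q ∈ s)
    (hXY : X ≠ Y) (hPQ : P ≠ Q) : ∃ a : ℝ, a ≠ 0 ∧ X -ᵥ Y = a • (P -ᵥ Q) := by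
  obtain ⟨v, hv⟩ := (collinear_iff_of_mem hX).1 hc
  obtain ⟨rY, hrY⟩ := hv Y hY
  obtain ⟨rP, hrP⟩ := hv P hP
  obtain ⟨rQ, hrQ⟩ := hv Q hQ
  have hY' : X -ᵥ Y = (-rY) • v := by
    rw [hrY, vsub_vadd_eq_vsub_sub, vsub_self, zero_sub, neg_smul]
  have hPQ' : P -ᵥ Q = (rP - rQ) • v := by
    rw [hrP, hrQ, vadd_vsub_vadd_cancel_right, ← sub_smul]
  have hrY0 : (-rY) ≠ 0 := by
    intro h
    apply hXY
    have : X -ᵥ Y = 0 := by rw [hY', h, zero_smul]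
    rw [vsub_eq_zero_iff_eq] at this
    exact this
  have hrPQ : rP - rQ ≠ 0 := by
    intro h
    apply hPQ
    have : P -ᵥ Q = 0 := by rw [hPQ', h, zero_smul]
    rwa [vsub_eq_zero_iff_eq] at this
  refine ⟨(-rY) / (rP - rQ), div_ne_zero hrY0 hrPQ, ?_⟩
  rw [hY', hPQ', smul_smul, div_mul_cancel₀ _ hrPQ]

private lemma ne_of_ncol3 {X Y Z : EuclideanSpace ℝ (Fin 2)}
    (h : ¬Collinear ℝ ({X, Y, Z} : Set (EuclideanSpace ℝ (Fin 2)))) :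
    X ≠ Y ∧ X ≠ Z ∧ Y ≠ Z := by
  refine ⟨?_, ?_, ?_⟩ <;> rintro rfl <;> apply h
  · exact (collinear_pair ℝ X Z).subset (by intro t ht; simp at ht ⊢; tauto)
  · exact (collinear_pair ℝ X Y).subset (by intro t ht; simp at ht ⊢; tauto)
  · exact (collinear_pair ℝ X Y).subset (by intro t ht; simp at ht ⊢; tauto)

/-- Three distinct points on a circle are not collinear. -/
private lemma not_collinear_of_dist {x y z cc : EuclideanSpace ℝ (Fin 2)} {rr : ℝ}
    (hx : dist x cc = rr) (hy : dist y cc = rr) (hz : dist z cc = rr)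
    (hxy : x ≠ y) (hxz : x ≠ z) (hyz : y ≠ z) :
    ¬Collinear ℝ ({x, y, z} : Set (EuclideanSpace ℝ (Fin 2))) := by
  have hc : EuclideanGeometry.Cospherical ({x, y, z} : Set (EuclideanSpace ℝ (Fin 2))) := by
    refine ⟨cc, rr, ?_⟩
    intro t ht
    simp only [Set.mem_insert_iff, Set.mem_singleton_iff] at ht
    rcases ht with rfl | rfl | rfl <;> assumption
  rw [← affineIndependent_iff_not_collinear_set]
  exact hc.affineIndependent_of_ne hxy hxz hyz

set_option maxHeartbeats 2000000 in
private lemma miquel_aux (A B C D E F c0 c1 c2 c3 : EuclideanSpace ℝ (Fin 2)) (r0 r1 r2 r3 : ℝ)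
    (hl0 : Collinear ℝ ({A, B, C} : Set V2)) (hl1 : Collinear ℝ ({A, D, E} : Set V2))
    (hl2 : Collinear ℝ ({B, D, F} : Set V2)) (hl3 : Collinear ℝ ({C, E, F} : Set V2))
    (h0 : ¬Collinear ℝ ({D, E, F} : Set V2)) (h1 : ¬Collinear ℝ ({B, C, F} : Set V2))
    (h2 : ¬Collinear ℝ ({A, C, E} : Set V2)) (h3 : ¬Collinear ℝ ({A, B, D} : Set V2))
    (hD0 : dist D c0 = r0) (hE0 : dist E c0 = r0) (hF0 : dist F c0 = r0)
    (hB1 : dist B c1 = r1) (hC1 : dist C c1 = r1) (hF1 : dist F c1 = r1)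
    (hA2 : dist A c2 = r2) (hC2 : dist C c2 = r2) (hE2 : dist E c2 = r2)
    (hA3 : dist A c3 = r3) (hB3 : dist B c3 = r3) (hD3 : dist D c3 = r3) :
    ∃ q : EuclideanSpace ℝ (Fin 2),
      dist q c0 = r0 ∧ dist q c1 = r1 ∧ dist q c2 = r2 ∧ dist q c3 = r3 := by
  obtain ⟨hDE, hDF, hEF⟩ := ne_of_ncol3 h0
  obtain ⟨hBC, hBF, hCF⟩ := ne_of_ncol3 h1
  obtain ⟨hAC, hAE, hCE⟩ := ne_of_ncol3 h2
  obtain ⟨hAB, hAD, hBD⟩ := ne_of_ncol3 h3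
  -- the two base spheres
  have hD0' : D ∈ (⟨c0, r0⟩ : EuclideanGeometry.Sphere V2) := hD0
  have hE0' : E ∈ (⟨c0, r0⟩ : EuclideanGeometry.Sphere V2) := hE0
  have hF0' : F ∈ (⟨c0, r0⟩ : EuclideanGeometry.Sphere V2) := hF0
  have hB1' : B ∈ (⟨c1, r1⟩ : EuclideanGeometry.Sphere V2) := hB1
  have hC1' : C ∈ (⟨c1, r1⟩ : EuclideanGeometry.Sphere V2) := hC1
  have hF1' : F ∈ (⟨c1, r1⟩ : EuclideanGeometry.Sphere V2) := hF1
  have hFc0 : F ≠ c0 := by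
    rintro rfl
    apply hDF
    have : dist D F = 0 := by rw [hD0, ← hF0, dist_self]
    exact dist_eq_zero.1 this
  have hFc1 : F ≠ c1 := by
    rintro rfl
    apply hBF
    have : dist B F = 0 := by rw [hB1, ← hF1, dist_self]
    exact dist_eq_zero.1 this
  -- the line of centers and the reflected point
  haveI : Nonempty (line[ℝ, c0, c1] : AffineSubspace ℝ V2) :=
    ⟨⟨c0, left_mem_affineSpan_pair ℝ c0 c1⟩⟩
  set q := EuclideanGeometry.reflection (line[ℝ, c0, c1]) F with hqdef
  have hq0 : dist q c0 = r0 := by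
    rw [dist_comm, hqdef,
      EuclideanGeometry.dist_reflection_eq_of_mem _ (left_mem_affineSpan_pair ℝ c0 c1) F,
      dist_comm, hF0]
  have hq1 : dist q c1 = r1 := by
    rw [dist_comm, hqdef,
      EuclideanGeometry.dist_reflection_eq_of_mem _ (right_mem_affineSpan_pair ℝ c0 c1) F,
      dist_comm, hF1]
  have hq0' : q ∈ (⟨c0, r0⟩ : EuclideanGeometry.Sphere V2) := hq0
  have hq1' : q ∈ (⟨c1, r1⟩ : EuclideanGeometry.Sphere V2) := hq1
  -- q is distinct from all six intersection points
  have hqE : q ≠ E := fun h =>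
    not_collinear_of_dist hC1 (h ▸ hq1) hF1 hCE hCF hEF hl3
  have hqC : q ≠ C := fun h =>
    not_collinear_of_dist (h ▸ hq0) hE0 hF0 hCE hCF hEF hl3
  have hqD : q ≠ D := fun h =>
    not_collinear_of_dist hB1 (h ▸ hq1) hF1 hBD hBF hDF hl2
  have hqB : q ≠ B := fun h =>
    not_collinear_of_dist (h ▸ hq0) hD0 hF0 hBD hBF hDF hl2
  -- non-tangency: q ≠ F
  have hqF : q ≠ F := by
    intro hqF
    have hFL : F ∈ (line[ℝ, c0, c1] : AffineSubspace ℝ V2) := by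
      rwa [hqdef, EuclideanGeometry.reflection_eq_self_iff] at hqF
    have hcolF : Collinear ℝ ({F, c0, c1} : Set V2) :=
      collinear_insert_of_mem_affineSpan_pair hFL
    -- c0 -ᵥ F = a • (c1 -ᵥ F)
    obtain ⟨a, ha0, hav⟩ := collinear_dir hcolF (show c0 ∈ ({F, c0, c1} : Set V2) by simp)
      (by simp) (show c1 ∈ ({F, c0, c1} : Set V2) by simp) (by simp) hFc0.symm hFc1.symm
    -- B -ᵥ F = b • (D -ᵥ F)
    obtain ⟨b, hb0, hbv⟩ := collinear_dir hl2 (show B ∈ ({B, D, F} : Set V2) by simp)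
      (by simp) (show D ∈ ({B, D, F} : Set V2) by simp) (by simp) hBF hDF
    have K0' := EuclideanGeometry.Sphere.two_zsmul_oangle_center_add_two_zsmul_oangle_eq_pi
        hF0' hE0' hD0' hEF hDE.symm hDF.symm
    have K0 : (2 : ℤ) • ∡ D F c0 + (2 : ℤ) • ∡ F E D = (π : Real.Angle) := by
      exact_mod_cast K0'
    have K1' := EuclideanGeometry.Sphere.two_zsmul_oangle_center_add_two_zsmul_oangle_eq_pi
        hF1' hC1' hB1' hCF hBC.symm hBF.symm
    have K1 : (2 : ℤ) • ∡ B F c1 + (2 : ℤ) • ∡ F C B = (π : Real.Angle) := by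
      exact_mod_cast K1'
    have e1 : (2 : ℤ) • ∡ D F c0 = (2 : ℤ) • ∡ B F c1 := by
      simp only [EuclideanGeometry.oangle]
      rw [hav, hbv, Orientation.two_zsmul_oangle_smul_right_of_ne_zero _ _ _ ha0,
        Orientation.two_zsmul_oangle_smul_left_of_ne_zero _ _ _ hb0]
    have e2 : (2 : ℤ) • ∡ F E D = (2 : ℤ) • ∡ F C B := by
      have h' := K0.trans K1.symm
      rw [e1] at h'
      exact add_left_cancel h'
    -- rewrite e2 in terms of reference direction vectors
    -- F -ᵥ E = u • (F -ᵥ C)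
    obtain ⟨u, hu0, huv⟩ := collinear_dir hl3 (show F ∈ ({C, E, F} : Set V2) by simp)
      (show E ∈ ({C, E, F} : Set V2) by simp) (by simp)
      (show C ∈ ({C, E, F} : Set V2) by simp) hEF.symm hCF.symm
    -- D -ᵥ E = w • (D -ᵥ A)
    obtain ⟨w, hw0, hwv⟩ := collinear_dir hl1 (show D ∈ ({A, D, E} : Set V2) by simp)
      (show E ∈ ({A, D, E} : Set V2) by simp) (by simp)
      (show A ∈ ({A, D, E} : Set V2) by simp) hDE hAD.symm
    -- B -ᵥ C = v • (B -ᵥ A)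
    obtain ⟨v, hv0, hvv⟩ := collinear_dir hl0 (show B ∈ ({A, B, C} : Set V2) by simp)
      (show C ∈ ({A, B, C} : Set V2) by simp) (by simp)
      (show A ∈ ({A, B, C} : Set V2) by simp) hBC hAB.symm
    have e3 : (2 : ℤ) • ori2.oangle (F -ᵥ C) (D -ᵥ A) = (2 : ℤ) • ori2.oangle (F -ᵥ C) (B -ᵥ A) := by
      have h' := e2
      simp only [EuclideanGeometry.oangle] at h'
      rw [huv, hwv, hvv, Orientation.two_zsmul_oangle_smul_left_of_ne_zero _ _ _ hu0,
        Orientation.two_zsmul_oangle_smul_right_of_ne_zero _ _ _ hw0,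
        Orientation.two_zsmul_oangle_smul_right_of_ne_zero _ _ _ hv0] at h'
      exact h'
    have hx : (B -ᵥ A : V2) ≠ 0 := vsub_ne_zero.2 hAB.symm
    have hy : (F -ᵥ C : V2) ≠ 0 := vsub_ne_zero.2 hCF.symm
    have hz : (D -ᵥ A : V2) ≠ 0 := vsub_ne_zero.2 hAD.symm
    have hBAD : Collinear ℝ ({B, A, D} : Set V2) := by
      rw [← EuclideanGeometry.oangle_eq_zero_or_eq_pi_iff_collinear,
        ← Real.Angle.two_zsmul_eq_zero_iff]
      simp only [EuclideanGeometry.oangle]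
      calc (2 : ℤ) • ori2.oangle (B -ᵥ A) (D -ᵥ A)
          = (2 : ℤ) • (ori2.oangle (B -ᵥ A) (F -ᵥ C) + ori2.oangle (F -ᵥ C) (D -ᵥ A)) := by
            rw [Orientation.oangle_add _ hx hy hz]
        _ = (2 : ℤ) • ori2.oangle (B -ᵥ A) (F -ᵥ C)
            + (2 : ℤ) • ori2.oangle (F -ᵥ C) (D -ᵥ A) := smul_add _ _ _
        _ = (2 : ℤ) • ori2.oangle (B -ᵥ A) (F -ᵥ C)
            + (2 : ℤ) • ori2.oangle (F -ᵥ C) (B -ᵥ A) := by rw [e3]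
        _ = (2 : ℤ) • (ori2.oangle (B -ᵥ A) (F -ᵥ C) + ori2.oangle (F -ᵥ C) (B -ᵥ A)) :=
            (smul_add _ _ _).symm
        _ = (2 : ℤ) • ori2.oangle (B -ᵥ A) (B -ᵥ A) := by rw [Orientation.oangle_add _ hx hy hx]
        _ = 0 := by rw [Orientation.oangle_self _]; simp
    exact h3 (hBAD.subset (by intro t ht; simp at ht ⊢; tauto))
  -- the chase for the third circle
  have key2 : (2 : ℤ) • ∡ E q C = (2 : ℤ) • ∡ E A C := by
    have s1 : (2 : ℤ) • ∡ E q F = (2 : ℤ) • ∡ E D F :=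
      EuclideanGeometry.Sphere.two_zsmul_oangle_eq hE0' hq0' hD0' hF0' hqE hqF hDE hDF
    have s2 : (2 : ℤ) • ∡ F q C = (2 : ℤ) • ∡ F B C :=
      EuclideanGeometry.Sphere.two_zsmul_oangle_eq hF1' hq1' hB1' hC1' hqF hqC hBF hBC
    have sadd : ∡ E q F + ∡ F q C = ∡ E q C :=
      EuclideanGeometry.oangle_add hqE.symm hqF.symm hqC.symm
    -- E -ᵥ D = a1 • (E -ᵥ A)
    obtain ⟨a1, ha1, hv1⟩ := collinear_dir hl1 (show E ∈ ({A, D, E} : Set V2) by simp)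
      (show D ∈ ({A, D, E} : Set V2) by simp) (by simp)
      (show A ∈ ({A, D, E} : Set V2) by simp) hDE.symm hAE.symm
    -- F -ᵥ D = a2 • (F -ᵥ B)
    obtain ⟨a2, ha2, hv2⟩ := collinear_dir hl2 (show F ∈ ({B, D, F} : Set V2) by simp)
      (show D ∈ ({B, D, F} : Set V2) by simp) (by simp)
      (show B ∈ ({B, D, F} : Set V2) by simp) hDF.symm hBF.symm
    -- C -ᵥ B = a3 • (C -ᵥ A)
    obtain ⟨a3, ha3, hv3⟩ := collinear_dir hl0 (show C ∈ ({A, B, C} : Set V2) by simp)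
      (show B ∈ ({A, B, C} : Set V2) by simp) (by simp)
      (show A ∈ ({A, B, C} : Set V2) by simp) hBC.symm hAC.symm
    have tri : (2 : ℤ) • ∡ E D F + (2 : ℤ) • ∡ F B C = (2 : ℤ) • ∡ E A C := by
      simp only [EuclideanGeometry.oangle]
      rw [hv1, hv2, hv3, Orientation.two_zsmul_oangle_smul_left_of_ne_zero _ _ _ ha1,
        Orientation.two_zsmul_oangle_smul_right_of_ne_zero _ _ _ ha2,
        Orientation.two_zsmul_oangle_smul_right_of_ne_zero _ _ _ ha3, ← smul_add,
        Orientation.oangle_add _ (vsub_ne_zero.2 hAE.symm) (vsub_ne_zero.2 hBF.symm)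
          (vsub_ne_zero.2 hAC.symm)]
    calc (2 : ℤ) • ∡ E q C = (2 : ℤ) • ∡ E q F + (2 : ℤ) • ∡ F q C := by
          rw [← smul_add, sadd]
      _ = (2 : ℤ) • ∡ E A C := by rw [s1, s2, tri]
  -- the chase for the fourth circle
  have key3 : (2 : ℤ) • ∡ D q B = (2 : ℤ) • ∡ D A B := by
    have s1 : (2 : ℤ) • ∡ D q F = (2 : ℤ) • ∡ D E F :=
      EuclideanGeometry.Sphere.two_zsmul_oangle_eq hD0' hq0' hE0' hF0' hqD hqF hDE.symm hEF
    have s2 : (2 : ℤ) • ∡ F q B = (2 : ℤ) • ∡ F C B :=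
      EuclideanGeometry.Sphere.two_zsmul_oangle_eq hF1' hq1' hC1' hB1' hqF hqB hCF hBC.symm
    have sadd : ∡ D q F + ∡ F q B = ∡ D q B :=
      EuclideanGeometry.oangle_add hqD.symm hqF.symm hqB.symm
    -- D -ᵥ E = b1 • (D -ᵥ A)
    obtain ⟨b1, hb1, hv1⟩ := collinear_dir hl1 (show D ∈ ({A, D, E} : Set V2) by simp)
      (show E ∈ ({A, D, E} : Set V2) by simp) (by simp)
      (show A ∈ ({A, D, E} : Set V2) by simp) hDE hAD.symm
    -- F -ᵥ E = b2 • (F -ᵥ C)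
    obtain ⟨b2, hb2, hv2⟩ := collinear_dir hl3 (show F ∈ ({C, E, F} : Set V2) by simp)
      (show E ∈ ({C, E, F} : Set V2) by simp) (by simp)
      (show C ∈ ({C, E, F} : Set V2) by simp) hEF.symm hCF.symm
    -- B -ᵥ C = b3 • (B -ᵥ A)
    obtain ⟨b3, hb3, hv3⟩ := collinear_dir hl0 (show B ∈ ({A, B, C} : Set V2) by simp)
      (show C ∈ ({A, B, C} : Set V2) by simp) (by simp)
      (show A ∈ ({A, B, C} : Set V2) by simp) hBC hAB.symm
    have tri : (2 : ℤ) • ∡ D E F + (2 : ℤ) • ∡ F C B = (2 : ℤ) • ∡ D A B := by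
      simp only [EuclideanGeometry.oangle]
      rw [hv1, hv2, hv3, Orientation.two_zsmul_oangle_smul_left_of_ne_zero _ _ _ hb1,
        Orientation.two_zsmul_oangle_smul_right_of_ne_zero _ _ _ hb2,
        Orientation.two_zsmul_oangle_smul_right_of_ne_zero _ _ _ hb3, ← smul_add,
        Orientation.oangle_add _ (vsub_ne_zero.2 hAD.symm) (vsub_ne_zero.2 hCF.symm)
          (vsub_ne_zero.2 hAB.symm)]
    calc (2 : ℤ) • ∡ D q B = (2 : ℤ) • ∡ D q F + (2 : ℤ) • ∡ F q B := by
          rw [← smul_add, sadd]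
      _ = (2 : ℤ) • ∡ D A B := by rw [s1, s2, tri]
  -- conclude membership in the remaining circumcircles
  have conc : ∀ (X Y Z cc : V2) (rr : ℝ), ¬Collinear ℝ ({X, Y, Z} : Set V2) →
      dist X cc = rr → dist Y cc = rr → dist Z cc = rr →
      (2 : ℤ) • ∡ X q Z = (2 : ℤ) • ∡ X Y Z → dist q cc = rr := by
    intro X Y Z cc rr hncol hX hY hZ hkey
    have hind : AffineIndependent ℝ ![X, Y, Z] :=
      affineIndependent_iff_not_collinear_set.2 hncol
    let t : Triangle ℝ V2 := ⟨![X, Y, Z], hind⟩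
    have hqmem : q ∈ t.circumsphere :=
      Affine.Triangle.mem_circumsphere_of_two_zsmul_oangle_eq
        (i₁ := 0) (i₂ := 1) (i₃ := 2) (by decide) (by decide) (by decide) hkey
    have hspan : affineSpan ℝ (Set.range t.points) = ⊤ :=
      t.span_eq_top finrank_euclideanSpace_fin
    have hdists : ∀ i, dist (t.points i) cc = rr := by
      intro i
      fin_cases i <;> simpa [t] using ‹_›
    have hcc : cc = t.circumcenter :=
      t.eq_circumcenter_of_dist_eq (by rw [hspan]; trivial) hdists
    have hrr : rr = t.circumradius :=
      t.eq_circumradius_of_dist_eq (by rw [hspan]; trivial) hdists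
    rw [EuclideanGeometry.mem_sphere, Affine.Simplex.circumsphere_center,
      Affine.Simplex.circumsphere_radius] at hqmem
    rw [hcc, hrr]
    exact hqmem
  have hq2 : dist q c2 = r2 :=
    conc E A C c2 r2 (fun hc => h2 (hc.subset (by intro t ht; simp at ht ⊢; tauto)))
      hE2 hA2 hC2 key2
  have hq3 : dist q c3 = r3 :=
    conc D A B c3 r3 (fun hc => h3 (hc.subset (by intro t ht; simp at ht ⊢; tauto)))
      hD3 hA3 hB3 key3
  exact ⟨q, hq0, hq1, hq2, hq3⟩

end MiquelAux

/-- The Wallace–Steiner point theorem: given four lines in the Euclidean plane in general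
position (no two parallel — so each pair meets in a point `p i j` — and no three concurrent),
any choice of circumcircles (centre `c i`, radius `r i`) through the three vertices of each of
the four triangles formed by the lines taken three at a time admits a common point `q`
lying on all four circles. -/
theorem stmt_18 (ℓ : Fin 4 → AffineSubspace ℝ (EuclideanSpace ℝ (Fin 2)))
    (hline : ∀ i, ∃ a b : EuclideanSpace ℝ (Fin 2), a ≠ b ∧ ℓ i = affineSpan ℝ {a, b})
    (p : Fin 4 → Fin 4 → EuclideanSpace ℝ (Fin 2))
    (hsymm : ∀ i j, p i j = p j i)
    (hmem : ∀ i j, i ≠ j → p i j ∈ ℓ i ∧ p i j ∈ ℓ j)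
    (hgen : ∀ i j k, i ≠ j → i ≠ k → j ≠ k → p i j ∉ ℓ k)
    (c : Fin 4 → EuclideanSpace ℝ (Fin 2)) (r : Fin 4 → ℝ)
    (hcirc : ∀ i, ∀ m : Fin 3, dist (steinerVtx p i m) (c i) = r i) :
    ∃ q : EuclideanSpace ℝ (Fin 2), ∀ i, dist q (c i) = r i := by
  classical
  -- collinearity of the three intersection points on each line
  have hcol : ∀ (i : Fin 4) (x y z : EuclideanSpace ℝ (Fin 2)), x ∈ ℓ i → y ∈ ℓ i → z ∈ ℓ i →
      Collinear ℝ ({x, y, z} : Set (EuclideanSpace ℝ (Fin 2))) := by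
    intro i x y z hx hy hz
    obtain ⟨a, b, -, hab⟩ := hline i
    rw [hab] at hx hy hz
    exact collinear_triple_of_mem_affineSpan_pair hx hy hz
  -- non-collinearity of the vertices of each triangle
  have ncol : ∀ j k l : Fin 4, j ≠ k → j ≠ l → k ≠ l →
      ¬Collinear ℝ ({p j k, p j l, p k l} : Set (EuclideanSpace ℝ (Fin 2))) := by
    intro j k l hjk hjl hkl hc
    have hne : p j k ≠ p j l := by
      intro he
      exact hgen j k l hjk hjl hkl (he ▸ (hmem j l hjl).2)
    have hmem' : p k l ∈ line[ℝ, p j k, p j l] :=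
      hc.mem_affineSpan_of_mem_of_ne (by simp) (by simp) (by simp) hne
    have hle : line[ℝ, p j k, p j l] ≤ ℓ j := by
      rw [affineSpan_le]
      rintro t ht
      simp only [Set.mem_insert_iff, Set.mem_singleton_iff] at ht
      rcases ht with rfl | rfl
      · exact (hmem j k hjk).1
      · exact (hmem j l hjl).1
    exact hgen k l j hkl hjk.symm hjl.symm (hle hmem')
  obtain ⟨q, hq0, hq1, hq2, hq3⟩ :=
    miquel_aux (p 0 1) (p 0 2) (p 0 3) (p 1 2) (p 1 3) (p 2 3) (c 0) (c 1) (c 2) (c 3)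
      (r 0) (r 1) (r 2) (r 3)
      (hcol 0 _ _ _ (hmem 0 1 (by decide)).1 (hmem 0 2 (by decide)).1 (hmem 0 3 (by decide)).1)
      (hcol 1 _ _ _ (hmem 0 1 (by decide)).2 (hmem 1 2 (by decide)).1 (hmem 1 3 (by decide)).1)
      (hcol 2 _ _ _ (hmem 0 2 (by decide)).2 (hmem 1 2 (by decide)).2 (hmem 2 3 (by decide)).1)
      (hcol 3 _ _ _ (hmem 0 3 (by decide)).2 (hmem 1 3 (by decide)).2 (hmem 2 3 (by decide)).2)
      (ncol 1 2 3 (by decide) (by decide) (by decide))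
      (ncol 0 2 3 (by decide) (by decide) (by decide))
      (ncol 0 1 3 (by decide) (by decide) (by decide))
      (ncol 0 1 2 (by decide) (by decide) (by decide))
      (hcirc 0 2) (hcirc 0 1) (hcirc 0 0)
      (hcirc 1 2) (hcirc 1 1) (hcirc 1 0)
      (hcirc 2 2) (hcirc 2 1) (hcirc 2 0)
      (hcirc 3 2) (hcirc 3 1) (hcirc 3 0)
  refine ⟨q, fun i => ?_⟩
  fin_cases i
  exacts [hq0, hq1, hq2, hq3]
end
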